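/- Every K-bilinear space embeds (via a bilinear monomorphism) into a non-degenerate K-bilinear space. -/
import Mathlib


universe u

/-- Every bilinear space embeds, via a bilinear monomorphism, into a non-degenerate
bilinear space. -/
theorem embeds_into_nondegenerate {K : Type u} [Field K]
    (V : Type u) [AddCommGroup V] [Module K V] (BV : V →ₗ[K] V →ₗ[K] K) :
    ∃ (W : Type u) (_ : AddCommGroup W) (_ : Module K W)
      (BW : W →ₗ[K] W →ₗ[K] K) (f : V →ₗ[K] W),
      Function.Injective f ∧ (∀ x y : V, BW (f x) (f y) = BV x y) ∧
      (∀ x : W, (∀ y : W, BW x y = 0) → x = 0) ∧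
      (∀ y : W, (∀ x : W, BW x y = 0) → y = 0) := by
  refine ⟨V × (V →ₗ[K] K), inferInstance, inferInstance,
    LinearMap.mk₂ K (fun x y => BV x.1 y.1 + x.2 y.1 + y.2 x.1)
      (by intro x x' y; simp; ring)
      (by intro c x y; simp; ring)
      (by intro x y y'; simp; ring)
      (by intro c x y; simp; ring),
    LinearMap.inl K V (V →ₗ[K] K), LinearMap.inl_injective, ?_, ?_, ?_⟩
  · intro x y; simp
  · rintro ⟨v, φ⟩ h
    have hv : v = 0 := by
      rw [← Module.forall_dual_apply_eq_zero_iff K v]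
      intro ψ
      have := h (0, ψ)
      simpa using this
    subst hv
    have hφ : φ = 0 := by
      ext w
      have := h (w, 0)
      simpa using this
    simp [hφ]
  · rintro ⟨v, φ⟩ h
    have hv : v = 0 := by
      rw [← Module.forall_dual_apply_eq_zero_iff K v]
      intro ψ
      have := h (0, ψ)
      simpa using this
    subst hv
    have hφ : φ = 0 := by
      ext w
      have := h (w, 0)
      simpa using this
    simp [hφ]
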